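/- For an ideal I in a Noetherian ring R, the set 𝓛(I) = {P ∈ Spec(R) : I_P is of linear type} is an open subset of Spec(R); more precisely, 𝓛(I) = Spec(R) ∖ V(C(I)), where V(C(I)) is the set of primes containing C(I). -/

import Mathlib

noncomputable section

universe u v

/-- The `R`-algebra map `φ : T = R[y_i : i ∈ ι] → R[t]` sending `y_i ↦ f i · t`. -/
def reesHom {R : Type u} [CommRing R] {ι : Type v} (f : ι → R) :
    MvPolynomial ι R →ₐ[R] Polynomial R :=
  MvPolynomial.aeval fun i => Polynomial.C (f i) * Polynomial.X

/-- `J`, the defining ideal of the Rees algebra of the ideal generated by `f`. -/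
def reesJ {R : Type u} [CommRing R] {ι : Type v} (f : ι → R) :
    Ideal (MvPolynomial ι R) :=
  RingHom.ker (reesHom f)

/-- `L`, the ideal of `T` generated by the linear relations `∑ aᵢ yᵢ` with `∑ aᵢ fᵢ = 0`. -/
def linRel {R : Type u} [CommRing R] {ι : Type v} (f : ι → R) :
    Ideal (MvPolynomial ι R) :=
  Ideal.span {p | ∃ a : ι →₀ R, (a.sum fun i r => r * f i) = 0 ∧
    p = a.sum fun i r => MvPolynomial.C r * MvPolynomial.X i}

/-- The conductor `C(I) = L :_R J = {r ∈ R : r J ⊆ L}`. -/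
def conductorIdeal {R : Type u} [CommRing R] {ι : Type v} (f : ι → R) : Ideal R :=
  Submodule.colon (Submodule.restrictScalars R (linRel f))
    (Submodule.restrictScalars R (reesJ f))

/-- The ideal generated by `f` is of linear type if `J = L`. -/
def IsLinearType {R : Type u} [CommRing R] {ι : Type v} (f : ι → R) : Prop :=
  reesJ f = linRel f

end

section Aux

open MvPolynomial

attribute [local instance] MvPolynomial.algebraMvPolynomial

variable {R : Type} [CommRing R] {S : Type} [CommRing S] [Algebra R S] {ι : Type}

/-- The commuting square: `reesHom g ∘ map (algebraMap R S) = Polynomial.map ∘ reesHom f`. -/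
lemma reesHom_map (f : ι → R) (p : MvPolynomial ι R) :
    reesHom (fun i => algebraMap R S (f i)) (MvPolynomial.map (algebraMap R S) p)
      = Polynomial.map (algebraMap R S) (reesHom f p) := by
  induction p using MvPolynomial.induction_on with
  | C a => simp [reesHom, Polynomial.algebraMap_eq]
  | add p q hp hq => simp [hp, hq]
  | mul_X p i hp =>
      simp only [map_mul, MvPolynomial.map_X, Polynomial.map_mul, hp]
      simp [reesHom]

lemma reesHom_lin (f : ι → R) (a : ι →₀ R) :
    reesHom f (a.sum fun i r => MvPolynomial.C r * MvPolynomial.X i)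
      = Polynomial.C (a.sum fun i r => r * f i) * Polynomial.X := by
  rw [map_finsuppSum, map_finsuppSum, Finsupp.sum_mul]
  refine Finsupp.sum_congr fun i _ => ?_
  simp [reesHom]
  ring

lemma linRel_le_reesJ (f : ι → R) : linRel f ≤ reesJ f := by
  rw [linRel, Ideal.span_le]
  rintro p ⟨a, ha, rfl⟩
  show _ ∈ RingHom.ker _
  rw [RingHom.mem_ker]
  show reesHom f _ = 0
  rw [reesHom_lin, ha]
  simp

lemma image_linRel_mem (f : ι → R) {p : MvPolynomial ι R} (hp : p ∈ linRel f) :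
    MvPolynomial.map (algebraMap R S) p ∈ linRel (fun i => algebraMap R S (f i)) := by
  have : linRel f ≤ Ideal.comap (MvPolynomial.map (algebraMap R S))
      (linRel (fun i => algebraMap R S (f i))) := by
    rw [linRel, Ideal.span_le]
    rintro q ⟨a, ha, rfl⟩
    rw [SetLike.mem_coe, Ideal.mem_comap]
    refine Ideal.subset_span ⟨a.mapRange (algebraMap R S) (map_zero _), ?_, ?_⟩
    · rw [Finsupp.sum_mapRange_index (by simp)]
      rw [← map_zero (algebraMap R S), ← ha, map_finsuppSum]
      exact Finsupp.sum_congr fun i _ => by simp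
    · rw [Finsupp.sum_mapRange_index (by simp), map_finsuppSum]
      exact Finsupp.sum_congr fun i _ => by simp
  exact this hp

lemma exists_C_mul_eq_zero (M : Submonoid R) [IsLocalization M S] (h : Polynomial R)
    (hh : Polynomial.map (algebraMap R S) h = 0) :
    ∃ u ∈ M, Polynomial.C u * h = 0 := by
  have hc : ∀ k, algebraMap R S (h.coeff k) = 0 := fun k => by
    rw [← Polynomial.coeff_map, hh, Polynomial.coeff_zero]
  choose c hcz using fun k => (IsLocalization.map_eq_zero_iff M S _).mp (hc k)
  refine ⟨∏ k ∈ h.support, (c k : R), M.prod_mem fun k _ => (c k).2, ?_⟩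
  ext n
  simp only [Polynomial.coeff_C_mul, Polynomial.coeff_zero]
  by_cases hn : n ∈ h.support
  · rw [← Finset.prod_erase_mul _ _ hn, mul_assoc, hcz n, mul_zero]
  · rw [Polynomial.notMem_support_iff.mp hn, mul_zero]

lemma linRel_le_map [Fintype ι] (M : Submonoid R) [IsLocalization M S] (f : ι → R) :
    linRel (fun i => algebraMap R S (f i)) ≤
      (linRel f).map (algebraMap (MvPolynomial ι R) (MvPolynomial ι S)) := by
  rw [linRel, Ideal.span_le]
  rintro z ⟨b, hb, rfl⟩
  obtain ⟨t, ht⟩ := IsLocalization.exist_integer_multiples_of_finite M (fun i => b i)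
  choose a ha using ht
  have hsum : algebraMap R S (∑ i, a i * f i) = 0 := by
    rw [map_sum]
    have : ∀ i, algebraMap R S (a i * f i) = algebraMap R S t * (b i * algebraMap R S (f i)) := by
      intro i
      rw [map_mul, ha i, Algebra.smul_def]
      ring
    rw [Finset.sum_congr rfl fun i _ => this i, ← Finset.mul_sum]
    have hb' : ∑ i, b i * algebraMap R S (f i) = 0 := by
      rw [← hb]
      exact (Finsupp.sum_fintype b (fun i r => r * algebraMap R S (f i)) (fun i => zero_mul _)).symm
    rw [hb', mul_zero]
  obtain ⟨u, hu⟩ := (IsLocalization.map_eq_zero_iff M S _).mp hsum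
  set c : ι →₀ R := Finsupp.equivFunOnFinite.symm (fun i => (u : R) * (a i)) with hc
  have hcmem : (c.sum fun i r => MvPolynomial.C r * MvPolynomial.X i) ∈ linRel f := by
    refine Ideal.subset_span ⟨c, ?_, rfl⟩
    rw [Finsupp.sum_fintype _ _ (fun i => by simp)]
    have : ∀ i, c i * f i = (u : R) * (a i * f i) := fun i => by
      simp [hc, mul_assoc]
    rw [Finset.sum_congr rfl fun i _ => this i, ← Finset.mul_sum, hu]
  have himg := Ideal.mem_map_of_mem
    (algebraMap (MvPolynomial ι R) (MvPolynomial ι S)) hcmem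
  have hkey : algebraMap (MvPolynomial ι R) (MvPolynomial ι S)
        (c.sum fun i r => MvPolynomial.C r * MvPolynomial.X i)
      = MvPolynomial.C (algebraMap R S ((u : R) * (t : R)))
        * (b.sum fun i r => MvPolynomial.C r * MvPolynomial.X i) := by
    rw [MvPolynomial.algebraMap_def, map_finsuppSum]
    rw [Finsupp.sum_fintype _ _ (fun i => by simp), Finsupp.sum_fintype _ _ (fun i => by simp),
      Finset.mul_sum]
    refine Finset.sum_congr rfl fun i _ => ?_
    simp only [map_mul, MvPolynomial.map_C, MvPolynomial.map_X, hc,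
      Finsupp.coe_equivFunOnFinite_symm]
    rw [ha i, Algebra.smul_def, MvPolynomial.C_mul]
    ring
  have hunit : IsUnit (MvPolynomial.C (σ := ι) (algebraMap R S ((u : R) * (t : R)))) := by
    refine IsUnit.map MvPolynomial.C ?_
    exact IsLocalization.map_units S (⟨(u : R) * (t : R), M.mul_mem u.2 t.2⟩ : M)
  rw [SetLike.mem_coe, ← Ideal.unit_mul_mem_iff_mem _ hunit, ← hkey]
  exact himg

lemma dir1 (M : Submonoid R) [IsLocalization M S] (f : ι → R) (r : R) (hrM : r ∈ M) (hrC : r ∈ conductorIdeal f) :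
    IsLinearType (fun i => algebraMap R S (f i)) := by
  set g := fun i => algebraMap R S (f i) with hg
  refine le_antisymm ?_ (linRel_le_reesJ g)
  intro q hq
  obtain ⟨⟨p, s⟩, hps⟩ := IsLocalization.surj
    (M.map (MvPolynomial.C (σ := ι) : R →+* MvPolynomial ι R)) q
  obtain ⟨t, htM, hts⟩ := s.2
  have hps' : q * MvPolynomial.map (algebraMap R S) (s : MvPolynomial ι R)
      = MvPolynomial.map (algebraMap R S) p := hps
  have hker : reesHom g (MvPolynomial.map (algebraMap R S) p) = 0 := by
    rw [← hps', map_mul, RingHom.mem_ker.mp hq, zero_mul]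
  rw [reesHom_map] at hker
  obtain ⟨u, huM, hu⟩ := exists_C_mul_eq_zero M (reesHom f p) hker
  have hJ : MvPolynomial.C u * p ∈ reesJ f := by
    rw [reesJ, RingHom.mem_ker]
    show reesHom f _ = 0
    rw [map_mul]
    have : reesHom f (MvPolynomial.C u) = Polynomial.C u := by
      simp [reesHom, Polynomial.algebraMap_eq]
    rw [this, hu]
  have hL : MvPolynomial.C (r * u) * p ∈ linRel f := by
    have := Submodule.mem_colon.mp hrC (MvPolynomial.C u * p) hJ
    rw [MvPolynomial.smul_eq_C_mul, ← mul_assoc, ← MvPolynomial.C_mul] at this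
    exact this
  have himg : MvPolynomial.map (algebraMap R S) (MvPolynomial.C (r * u) * p)
      ∈ linRel g := image_linRel_mem f hL
  rw [map_mul, MvPolynomial.map_C] at himg
  rw [← hps'] at himg
  have hrearr : MvPolynomial.C (algebraMap R S (r * u))
        * (q * MvPolynomial.map (algebraMap R S) (s : MvPolynomial ι R))
      = (MvPolynomial.C (algebraMap R S (r * u))
        * MvPolynomial.map (algebraMap R S) (s : MvPolynomial ι R)) * q := by ring
  rw [hrearr] at himg
  have hunit : IsUnit (MvPolynomial.C (algebraMap R S (r * u))
      * MvPolynomial.map (algebraMap R S) (s : MvPolynomial ι R)) := by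
    refine IsUnit.mul ?_ ?_
    · exact IsUnit.map MvPolynomial.C
        (IsLocalization.map_units S (⟨r * u, M.mul_mem hrM huM⟩ : M))
    · exact IsLocalization.map_units (MvPolynomial ι S) s
  exact (Ideal.unit_mul_mem_iff_mem _ hunit).mp himg

lemma dir2 [IsNoetherianRing R] [Fintype ι] (M : Submonoid R) [IsLocalization M S] (f : ι → R)
    (h : IsLinearType (fun i => algebraMap R S (f i))) :
    ∃ r ∈ M, r ∈ conductorIdeal f := by
  classical
  set g := fun i => algebraMap R S (f i) with hg
  obtain ⟨G, hG⟩ : (reesJ f).FG := IsNoetherian.noetherian _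
  have key : ∀ x ∈ G, ∃ w ∈ M, MvPolynomial.C w * x ∈ linRel f := by
    intro x hxG
    have hxJ : x ∈ reesJ f := by rw [← hG]; exact Ideal.subset_span hxG
    have h1 : MvPolynomial.map (algebraMap R S) x ∈ linRel g := by
      rw [← h, reesJ, RingHom.mem_ker]
      show reesHom g _ = 0
      rw [reesHom_map, RingHom.mem_ker.mp hxJ, Polynomial.map_zero]
    have h2 := linRel_le_map M f h1
    obtain ⟨⟨a, s⟩, has⟩ := (IsLocalization.mem_map_algebraMap_iff
      (M.map (MvPolynomial.C (σ := ι) : R →+* MvPolynomial ι R)) (MvPolynomial ι S)).mp h2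
    have heq : algebraMap (MvPolynomial ι R) (MvPolynomial ι S) (x * (s : MvPolynomial ι R))
        = algebraMap (MvPolynomial ι R) (MvPolynomial ι S) (a : MvPolynomial ι R) := by
      rw [map_mul, ← has]; rfl
    obtain ⟨c, hc⟩ := IsLocalization.exists_of_eq
      (M := M.map (MvPolynomial.C (σ := ι) : R →+* MvPolynomial ι R)) heq
    obtain ⟨t, htM, hts⟩ := s.2
    obtain ⟨u, huM, huc⟩ := c.2
    refine ⟨u * t, M.mul_mem huM htM, ?_⟩
    have : MvPolynomial.C (u * t) * x = (c : MvPolynomial ι R) * (x * (s : MvPolynomial ι R)) := by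
      rw [← huc, ← hts, MvPolynomial.C_mul]; ring
    rw [this, hc]
    exact Ideal.mul_mem_left _ _ a.2
  choose w hwM hwL using key
  set r : R := ∏ x ∈ G.attach, w x x.2 with hr
  have hrM : r ∈ M := M.prod_mem fun x _ => hwM x x.2
  have hCr : ∀ x ∈ G, MvPolynomial.C r * x ∈ linRel f := by
    intro x hx
    have hmem : (⟨x, hx⟩ : {y // y ∈ G}) ∈ G.attach := Finset.mem_attach _ _
    rw [hr, ← Finset.prod_erase_mul _ _ hmem, MvPolynomial.C_mul, mul_assoc]
    exact Ideal.mul_mem_left _ _ (hwL x hx)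
  have main : ∀ p ∈ Ideal.span (G : Set (MvPolynomial ι R)), MvPolynomial.C r * p ∈ linRel f := by
    intro p hp
    induction hp using Submodule.span_induction with
    | mem x hx => exact hCr x hx
    | zero => simp
    | add x y _ _ hx hy => rw [mul_add]; exact add_mem hx hy
    | smul a x _ hx =>
        rw [smul_eq_mul, mul_left_comm]
        exact Ideal.mul_mem_left _ _ hx
  refine ⟨r, hrM, Submodule.mem_colon.mpr fun p hp => ?_⟩
  show r • p ∈ linRel f
  rw [MvPolynomial.smul_eq_C_mul]
  exact main p (by rw [hG]; exact hp)

end Aux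

/-- The locus `𝓛(I)` of primes `P` such that `I_P` is of linear
type equals the complement of `V(C(I))` in `Spec R`, and is open. -/
theorem stmt_2 {R : Type} [CommRing R] [IsNoetherianRing R] {m : ℕ}
    (f : Fin m → R) (I : Ideal R) (hI : I = Ideal.span (Set.range f)) :
    {P : PrimeSpectrum R |
        IsLinearType fun j => algebraMap R (Localization.AtPrime P.asIdeal) (f j)} =
      (PrimeSpectrum.zeroLocus (conductorIdeal f : Set R))ᶜ ∧
    IsOpen {P : PrimeSpectrum R |
        IsLinearType fun j => algebraMap R (Localization.AtPrime P.asIdeal) (f j)} := by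
  have hset : {P : PrimeSpectrum R |
        IsLinearType fun j => algebraMap R (Localization.AtPrime P.asIdeal) (f j)} =
      (PrimeSpectrum.zeroLocus (conductorIdeal f : Set R))ᶜ := by
    ext P
    simp only [Set.mem_setOf_eq, Set.mem_compl_iff, PrimeSpectrum.mem_zeroLocus]
    constructor
    · intro h hsub
      obtain ⟨r, hrM, hrC⟩ := dir2 P.asIdeal.primeCompl f h
      exact hrM (hsub hrC)
    · intro h
      obtain ⟨r, hrC, hrP⟩ := Set.not_subset.mp h
      exact dir1 P.asIdeal.primeCompl f r hrP hrC
  exact ⟨hset, hset ▸ (PrimeSpectrum.isClosed_zeroLocus _).isOpen_compl⟩
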